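/- Let q : R → A be a surjective ring homomorphism of commutative rings, B ⊆ R a subring such that q restricted to B is injective and B is torsion-free as an abelian group, and suppose for every a ∈ R there exists s ≥ 0 with 2^s·a ∈ B. Then ker(q) is contained in the torsion subgroup of (R, +), and q⁻¹(torsion subgroup of A) equals the torsion subgroup of R; consequently q induces an isomorphism R/T_R ≅ A/T_A of the quotients by torsion subgroups. -/
import Mathlib


theorem stmt_5 (R A : Type*) [CommRing R] [CommRing A] (q : R →+* A)
    (hq : Function.Surjective q) (B : Subring R)
    (hinj : Set.InjOn q (B : Set R))
    (htf : ∀ b ∈ B, ∀ m : ℤ, m ≠ 0 → m • b = 0 → b = 0)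
    (hdense : ∀ a : R, ∃ s : ℕ, (2 : R) ^ s * a ∈ B) :
    (∀ x : R, q x = 0 → x ∈ AddCommGroup.torsion R) ∧
    (⇑q ⁻¹' (AddCommGroup.torsion A : Set A) = (AddCommGroup.torsion R : Set R)) ∧
    ∃ e : R ⧸ (AddCommGroup.torsion R) ≃+ A ⧸ (AddCommGroup.torsion A),
      ∀ r : R, e (QuotientAddGroup.mk r) = QuotientAddGroup.mk (q r) := by
  have h2 : ∀ (s : ℕ) (x : R), (2 : R) ^ s * x = (2 ^ s : ℕ) • x := by
    intro s x
    rw [nsmul_eq_mul]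
    push_cast
    ring
  have h1 : ∀ x : R, q x = 0 → x ∈ AddCommGroup.torsion R := by
    intro x hx
    obtain ⟨s, hs⟩ := hdense x
    have hz : (2 : R) ^ s * x = 0 := by
      apply hinj hs (Subring.zero_mem B)
      simp [map_mul, hx]
    rw [AddCommGroup.mem_torsion, isOfFinAddOrder_iff_nsmul_eq_zero]
    exact ⟨2 ^ s, pow_pos (by norm_num) s, by rw [← h2]; exact hz⟩
  have h2eq : ⇑q ⁻¹' (AddCommGroup.torsion A : Set A) = (AddCommGroup.torsion R : Set R) := by
    ext x
    simp only [Set.mem_preimage, SetLike.mem_coe, AddCommGroup.mem_torsion,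
      isOfFinAddOrder_iff_nsmul_eq_zero]
    constructor
    · rintro ⟨n, hn, hnx⟩
      have : q (n • x) = 0 := by rw [map_nsmul, hnx]
      have hx := h1 _ this
      rw [AddCommGroup.mem_torsion, isOfFinAddOrder_iff_nsmul_eq_zero] at hx
      obtain ⟨m, hm, hmx⟩ := hx
      exact ⟨m * n, Nat.mul_pos hm hn, by rw [mul_comm, mul_nsmul]; exact hmx⟩
    · rintro ⟨n, hn, hnx⟩
      exact ⟨n, hn, by rw [← map_nsmul, hnx, map_zero]⟩
  refine ⟨h1, h2eq, ?_⟩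
  have hle : AddCommGroup.torsion R ≤
      (AddCommGroup.torsion A).comap q.toAddMonoidHom := by
    intro x hx
    have : x ∈ ⇑q ⁻¹' (AddCommGroup.torsion A : Set A) := by rw [h2eq]; exact hx
    exact this
  set f : R ⧸ (AddCommGroup.torsion R) →+ A ⧸ (AddCommGroup.torsion A) :=
    QuotientAddGroup.map _ _ q.toAddMonoidHom hle with hf
  have hfmk : ∀ r : R, f (QuotientAddGroup.mk r) = QuotientAddGroup.mk (q r) := by
    intro r; rfl
  have hinjf : Function.Injective f := by
    rw [injective_iff_map_eq_zero]
    intro y hy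
    induction y using QuotientAddGroup.induction_on with
    | H x =>
      rw [hfmk, QuotientAddGroup.eq_zero_iff] at hy
      rw [QuotientAddGroup.eq_zero_iff]
      have : x ∈ ⇑q ⁻¹' (AddCommGroup.torsion A : Set A) := hy
      rw [h2eq] at this
      exact this
  have hsurjf : Function.Surjective f := by
    intro y
    induction y using QuotientAddGroup.induction_on with
    | H a =>
      obtain ⟨r, hr⟩ := hq a
      exact ⟨QuotientAddGroup.mk r, by rw [hfmk, hr]⟩
  exact ⟨AddEquiv.ofBijective f ⟨hinjf, hsurjf⟩, hfmk⟩
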